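/- arXiv:1911.11626 — 3 statements merged into one kernel-verified Lean document; each statement's English description precedes it below -/
import Mathlib

section
/- In the Sisyphus system with μ = 0, if ẏ = h(x) with h invertible and differentiable and ẋ f' (x) = −V' (y), then y satisfies the Newtonian equation m(ẏ) ÿ = −V' (y) with velocity-dependent mass m(v) = (h⁻¹)' (v) · f' (h⁻¹(v)). -/
/-- Sisyphus system with `μ = 0`: if `ẏ = h(x)` with `h` an invertible differentiable
map (with differentiable inverse `hinv`) and `ẋ f'(x) = -V'(y)`, then `y` satisfies
the Newtonian equation `m(ẏ) ÿ = -V'(y)` with velocity-dependent mass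
`m v = (h⁻¹)'(v) * f'(h⁻¹ v)`. -/
theorem stmt4 (f V h hinv x y : ℝ → ℝ)
    (hfd : Differentiable ℝ f) (hVd : Differentiable ℝ V)
    (hhd : Differentiable ℝ h) (hhinvd : Differentiable ℝ hinv)
    (hli : Function.LeftInverse hinv h) (hri : Function.RightInverse hinv h)
    (hxd : Differentiable ℝ x) (hyd : Differentiable ℝ y)
    (hy2 : Differentiable ℝ (deriv y))
    (h1 : ∀ t, deriv y t = h (x t))
    (h2 : ∀ t, deriv x t * deriv f (x t) = -(deriv V (y t))) :
    ∀ t, (deriv hinv (deriv y t) * deriv f (hinv (deriv y t))) * deriv (deriv y) t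
        = -(deriv V (y t)) := by
  intro t
  have key : ∀ a : ℝ, deriv hinv (h a) * deriv h a = 1 := by
    intro a
    have : deriv (hinv ∘ h) a = deriv hinv (h a) * deriv h a :=
      deriv_comp (x := a) (hhinvd _) (hhd _)
    rw [← this]
    have : hinv ∘ h = id := funext hli
    rw [this, deriv_id]
  have hdy : deriv (deriv y) t = deriv h (x t) * deriv x t := by
    have : deriv y = h ∘ x := funext h1
    rw [this, deriv_comp (x := t) (hhd _) (hxd _)]
  rw [hdy, h1 t, hli (x t)]
  calc deriv hinv (h (x t)) * deriv f (x t) * (deriv h (x t) * deriv x t)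
      = (deriv hinv (h (x t)) * deriv h (x t)) * (deriv x t * deriv f (x t)) := by ring
    _ = -(deriv V (y t)) := by rw [key, h2 t, one_mul]
end

section
/- Eliminating y from the Sisyphus equations μẍ = f' (x)ẏ − g' (x) and ẋ f' (x) = −V' (y) with V(y) = y²/2 yields the Liénard-II type equation ẍ + [f' f'' /(μ + f' ²)] ẋ² + g' /(μ + f' ²) = 0. -/
/-- Eliminating `y` from the Sisyphus equations `μ ẍ = f'(x) ẏ - g'(x)` and
`ẋ f'(x) = -V'(y)` with `V y = y²/2` (so `V' y = y`) yields the Liénard-II type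
equation `ẍ + (f' f''/(μ + f'²)) ẋ² + g'/(μ + f'²) = 0`. -/
theorem stmt5 (f g x y : ℝ → ℝ) (μ : ℝ)
    (hf : ContDiff ℝ 2 f) (hg : ContDiff ℝ 2 g)
    (hxd : Differentiable ℝ x) (hx2 : Differentiable ℝ (deriv x))
    (hyd : Differentiable ℝ y)
    (hne : ∀ t, μ + (deriv f (x t)) ^ 2 ≠ 0)
    (h1 : ∀ t, μ * deriv (deriv x) t = deriv f (x t) * deriv y t - deriv g (x t))
    (h2 : ∀ t, deriv x t * deriv f (x t) = -(y t)) :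
    ∀ t, deriv (deriv x) t
        + (deriv f (x t) * deriv (deriv f) (x t) / (μ + (deriv f (x t)) ^ 2))
            * (deriv x t) ^ 2
        + deriv g (x t) / (μ + (deriv f (x t)) ^ 2) = 0 := by
  have hf1 : ContDiff ℝ 1 (deriv f) :=
    (contDiff_succ_iff_deriv.mp (show ContDiff ℝ (1 + 1) f by norm_num; exact hf)).2.2
  have hf'd : Differentiable ℝ (deriv f) := hf1.differentiable one_ne_zero
  intro t
  have hcomp : HasDerivAt (fun t => deriv x t * deriv f (x t))
      (deriv (deriv x) t * deriv f (x t) + deriv x t * (deriv (deriv f) (x t) * deriv x t)) t :=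
    (hx2 t).hasDerivAt.mul ((hf'd (x t)).hasDerivAt.comp t (hxd t).hasDerivAt)
  have heqfun : (fun t => deriv x t * deriv f (x t)) = fun t => -(y t) := funext h2
  rw [heqfun] at hcomp
  have hy' : HasDerivAt (fun t => -(y t)) (-(deriv y t)) t := (hyd t).hasDerivAt.neg
  have hkey : deriv (deriv x) t * deriv f (x t) + deriv x t * (deriv (deriv f) (x t) * deriv x t)
      = -(deriv y t) := hcomp.unique hy'
  have h1t := h1 t
  have hne' := hne t
  field_simp
  linear_combination h1t + deriv f (x t) * hkey
end

section
/- For the Hamiltonian H(F,G) = G⁴/4 − G²/2 + F²/(2(G² − 1)²), Hamilton's equations Ḟ = ∂H/∂G, Ġ = −∂H/∂F imply, after eliminating F, that y defined via ẏ = G (and y = F/(G² − 1)) satisfies (ẏ² − 1)ÿ = −y, provided G² ≠ 1. -/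
/-- For the Hamiltonian `H(F,G) = G⁴/4 - G²/2 + F²/(2(G²-1)²)`, Hamilton's
equations `Ḟ = ∂H/∂G`, `Ġ = -∂H/∂F` imply, after eliminating `F`, that `y`
defined by `y = F/(G² - 1)` satisfies `ẏ = G` and `(ẏ² - 1) ÿ = -y`
(i.e. `(G² - 1) Ġ = -y`), provided `G² ≠ 1`. -/
theorem stmt12 (F G : ℝ → ℝ)
    (hF : Differentiable ℝ F) (hG : Differentiable ℝ G)
    (hne : ∀ t, (G t) ^ 2 ≠ 1)
    (h1 : ∀ t, deriv F t
        = (G t) ^ 3 - G t - 2 * (F t) ^ 2 * G t / ((G t) ^ 2 - 1) ^ 3)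
    (h2 : ∀ t, deriv G t = -(F t) / ((G t) ^ 2 - 1) ^ 2)
    (y : ℝ → ℝ) (hy : y = fun t => F t / ((G t) ^ 2 - 1)) :
    (∀ t, deriv y t = G t) ∧
    (∀ t, ((G t) ^ 2 - 1) * deriv G t = -(y t)) := by
  constructor
  · intro t
    have hd : (G t) ^ 2 - 1 ≠ 0 := sub_ne_zero.2 (hne t)
    have hF' := (hF t).hasDerivAt
    have hG' := (hG t).hasDerivAt
    have hden : HasDerivAt (fun t => (G t) ^ 2 - 1) (2 * G t * deriv G t) t := by
      simpa [mul_comm] using ((hG'.pow 2).sub_const 1)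
    have hdy : HasDerivAt y
        ((deriv F t * ((G t) ^ 2 - 1) - F t * (2 * G t * deriv G t)) /
          ((G t) ^ 2 - 1) ^ 2) t := by
      rw [hy]; exact hF'.div hden hd
    rw [hdy.deriv, h1, h2]
    field_simp
    ring
  · intro t
    have hd : (G t) ^ 2 - 1 ≠ 0 := sub_ne_zero.2 (hne t)
    rw [h2, hy]
    field_simp
end
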